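/- The function κ(x) = (x − 1)²/(x − 1 − log x) is monotonically increasing on (1, ∞). -/

import Mathlib

open Real

lemma kappa_q_pos {x : ℝ} (hx : 1 < x) : 0 < x - 1 - Real.log x := by
  have := Real.log_lt_sub_one_of_pos (by linarith : (0:ℝ) < x) (by linarith : x ≠ 1)
  linarith

lemma kappa_hasDerivAt {x : ℝ} (hx : 1 < x) :
    HasDerivAt (fun x : ℝ => (x - 1) ^ 2 / (x - 1 - Real.log x))
      ((2 * (x - 1) * (x - 1 - Real.log x) - (x - 1) ^ 2 * (1 - x⁻¹)) /
        (x - 1 - Real.log x) ^ 2) x := by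
  have hx0 : (0:ℝ) < x := by linarith
  have hp : HasDerivAt (fun x : ℝ => (x - 1) ^ 2) (2 * (x - 1)) x := by
    have := ((hasDerivAt_id x).sub_const 1).fun_pow 2
    simpa using this
  have hq : HasDerivAt (fun x : ℝ => x - 1 - Real.log x) (1 - x⁻¹) x :=
    ((hasDerivAt_id x).sub_const 1).sub (Real.hasDerivAt_log hx0.ne')
  simpa using hp.fun_div hq (kappa_q_pos hx).ne'

theorem kappa_monotone :
    MonotoneOn (fun x : ℝ => (x - 1) ^ 2 / (x - 1 - Real.log x)) (Set.Ioi 1) := by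
  have hconv : Convex ℝ (Set.Ioi (1:ℝ)) := convex_Ioi 1
  have hdiff : DifferentiableOn ℝ (fun x : ℝ => (x - 1) ^ 2 / (x - 1 - Real.log x))
      (Set.Ioi 1) := fun x hx =>
    (kappa_hasDerivAt hx).differentiableAt.differentiableWithinAt
  apply monotoneOn_of_deriv_nonneg hconv hdiff.continuousOn
  · rw [interior_Ioi]; exact fun x hx => hdiff x hx |>.differentiableAt
      (Ioi_mem_nhds hx) |>.differentiableWithinAt
  · rw [interior_Ioi]
    intro x hx
    have hx : (1:ℝ) < x := hx
    have hx0 : (0:ℝ) < x := by linarith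
    rw [(kappa_hasDerivAt hx).deriv]
    have hq := kappa_q_pos hx
    -- key inequality: log x < (x - x⁻¹)/2
    have hlog : Real.log x < (x - x⁻¹) / 2 := by
      have h1 : 0 < Real.log x := Real.log_pos hx
      have h2 := Real.self_lt_sinh_iff.mpr h1
      rwa [Real.sinh_log hx0] at h2
    apply div_nonneg _ (sq_nonneg _)
    have hinv : x⁻¹ * x = 1 := inv_mul_cancel₀ hx0.ne'
    nlinarith [sq_nonneg (x - 1), mul_pos hx0 hq]
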